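/- (Approximate k-means error bound.) Fix ε > 0 and matrices U, Ū ∈ ℝ^{n×r} with Ū = M̄ C̄ for a membership matrix M̄ ∈ 𝕄_{n,r} and C̄ ∈ ℝ^{r×r}. Let (M, C) with M ∈ 𝕄_{n,r}, C ∈ ℝ^{r×r} satisfy ‖M C − U‖_F^2 ≤ (1+ε) min_{M' ∈ 𝕄_{n,r}, C' ∈ ℝ^{r×r}} ‖M' C' − U‖_F^2. Let Ω_k = {i ∈ [n] : M̄(i,k) = 1}. For any numbers δ_k > 0 with δ_k ≤ min_{l ≠ k} ‖C̄(l,:) − C̄(k,:)‖ for all k ∈ [r], define S_k = {i ∈ Ω_k : ‖(M C)(i,:) − Ū(i,:)‖ ≥ δ_k / 2}. Then (1) Σ_{k=1}^r |S_k| δ_k^2 ≤ 4(4 + 2ε) ‖Ū − U‖_F^2; and (2) if (16 + 8ε) ‖Ū − U‖_F^2 / δ_k^2 < |Ω_k| for all k ∈ [r], then, with G = ∪_{k=1}^r (Ω_k \ S_k), there exists an r×r permutation matrix J such that M̄(G,:) = M(G,:) J, i.e., M and M̄ assign the same clusters (up to relabeling) to all points in G. -/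

import Mathlib

open scoped BigOperators
open Matrix

noncomputable section

namespace MJ

/-- Euclidean (ℓ2) norm of a finite vector. -/
def l2 {k : ℕ} (v : Fin k → ℝ) : ℝ := Real.sqrt (∑ j, v j ^ 2)

/-- ℓ1 norm of a finite vector. -/
def l1 {k : ℕ} (v : Fin k → ℝ) : ℝ := ∑ i, |v i|

/-- Maximum absolute row sum (matrix ∞-norm). -/
def rowSumNorm {m k : ℕ} (A : Matrix (Fin m) (Fin k) ℝ) : ℝ := ⨆ i, ∑ j, |A i j|

/-- Frobenius norm. -/
def frob {m k : ℕ} (A : Matrix (Fin m) (Fin k) ℝ) : ℝ := Real.sqrt (∑ i, ∑ j, A i j ^ 2)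

/-- Spectral norm (ℓ2 operator norm). -/
def spec {m k : ℕ} (A : Matrix (Fin m) (Fin k) ℝ) : ℝ :=
  sSup {c : ℝ | ∃ x : Fin k → ℝ, l2 x ≤ 1 ∧ c = l2 (A.mulVec x)}

/-- `i`-th largest singular value (1-indexed), via Courant–Fischer max-min. -/
def singVal {m k : ℕ} (A : Matrix (Fin m) (Fin k) ℝ) (i : ℕ) : ℝ :=
  sSup {c : ℝ | ∃ V : Submodule ℝ (Fin k → ℝ), Module.finrank ℝ V = i ∧
    ∀ x ∈ V, c * l2 x ≤ l2 (A.mulVec x)}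

/-- Row-stochastic matrix. -/
def RowStochastic {k : ℕ} (P : Matrix (Fin k) (Fin k) ℝ) : Prop :=
  (∀ i j, 0 ≤ P i j) ∧ ∀ i, ∑ j, P i j = 1

/-- Probability vector. -/
def IsProbVec {k : ℕ} (v : Fin k → ℝ) : Prop := (∀ i, 0 ≤ v i) ∧ ∑ i, v i = 1

/-- Stationary distribution: a probability vector with πᵀ P = πᵀ. -/
def IsStationary {k : ℕ} (P : Matrix (Fin k) (Fin k) ℝ) (piv : Fin k → ℝ) : Prop :=
  IsProbVec piv ∧ ∀ j, ∑ i, piv i * P i j = piv j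

/-- Ergodicity (irreducible + aperiodic ⟺ primitive for finite chains). -/
def Ergodic' {k : ℕ} (P : Matrix (Fin k) (Fin k) ℝ) : Prop :=
  ∃ t : ℕ, ∀ i j, 0 < (P ^ t) i j

/-- ε-mixing time: τ(ε) = min{t : max_i (1/2)‖(P^t)(i,:) − π‖₁ ≤ ε}. -/
def mixingTime {k : ℕ} (P : Matrix (Fin k) (Fin k) ℝ) (piv : Fin k → ℝ) (ε : ℝ) : ℕ :=
  sInf {t : ℕ | ∀ i, (1/2) * ∑ j, |(P ^ t) i j - piv j| ≤ ε}

/-- Full SVD decomposition predicate: A = U S Vᵀ with U, V orthogonal and S diagonal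
with nonnegative entries arranged in descending order. -/
def IsSVD {m k : ℕ} (A : Matrix (Fin m) (Fin k) ℝ) (U : Matrix (Fin m) (Fin m) ℝ)
    (S : Matrix (Fin m) (Fin k) ℝ) (V : Matrix (Fin k) (Fin k) ℝ) : Prop :=
  Uᵀ * U = 1 ∧ Vᵀ * V = 1 ∧ A = U * S * Vᵀ ∧
  (∀ (i : Fin m) (j : Fin k), (i : ℕ) ≠ (j : ℕ) → S i j = 0) ∧
  (∀ i j, 0 ≤ S i j) ∧
  (∀ (a b : ℕ) (ham : a < m) (hak : a < k) (hbm : b < m) (hbk : b < k),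
    a ≤ b → S ⟨b, hbm⟩ ⟨b, hbk⟩ ≤ S ⟨a, ham⟩ ⟨a, hak⟩)

/-- `Ur` consists of the first `r` left singular vectors of `A`. -/
def IsLeftSingTrunc {m k : ℕ} (A : Matrix (Fin m) (Fin k) ℝ) (r : ℕ)
    (Ur : Matrix (Fin m) (Fin r) ℝ) : Prop :=
  ∃ U S V, IsSVD A U S V ∧ ∃ h : r ≤ m, ∀ (i : Fin m) (j : Fin r),
    Ur i j = U i ⟨(j : ℕ), lt_of_lt_of_le j.isLt h⟩

/-- `Vr` consists of the first `r` right singular vectors of `A`. -/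
def IsRightSingTrunc {m k : ℕ} (A : Matrix (Fin m) (Fin k) ℝ) (r : ℕ)
    (Vr : Matrix (Fin k) (Fin r) ℝ) : Prop :=
  IsLeftSingTrunc Aᵀ r Vr

/-- The matrix (I − EEᵀ)(FFᵀ), whose spectral/Frobenius norm is the sinΘ distance
between the column spaces of `E` and `F` (for `E`, `F` with orthonormal columns). -/
def sinThetaMat {k r : ℕ} (E F : Matrix (Fin k) (Fin r) ℝ) : Matrix (Fin k) (Fin k) ℝ :=
  (1 - E * Eᵀ) * (F * Fᵀ)

/-- Membership matrix: each row has exactly one entry 1 and all others 0. -/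
def IsMembership {k r : ℕ} (M : Matrix (Fin k) (Fin r) ℝ) : Prop :=
  ∀ i, ∃ j, M i j = 1 ∧ ∀ j', j' ≠ j → M i j' = 0

/-- A family of finsets forming a partition of `Fin k`. -/
def IsPartition {k r : ℕ} (Ω : Fin r → Finset (Fin k)) : Prop :=
  (∀ a b, a ≠ b → Disjoint (Ω a) (Ω b)) ∧ Finset.univ.biUnion Ω = Finset.univ

/-- `P` is aggregatable w.r.t. partition `Ω`: rows within the same cluster coincide. -/
def Aggregatable {k r : ℕ} (P : Matrix (Fin k) (Fin k) ℝ) (Ω : Fin r → Finset (Fin k)) : Prop :=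
  ∀ s, ∀ i ∈ Ω s, ∀ j ∈ Ω s, ∀ c, P i c = P j c

/-- Misclustering rate: min over bijections of the relative misclustering counts. -/
def MR {k r : ℕ} (Ω Ωh : Fin r → Finset (Fin k)) : ℝ :=
  ⨅ σ : Equiv.Perm (Fin r), ∑ j, (((Ω j) \ (Ωh (σ j))).card : ℝ) / ((Ω j).card : ℝ)

/-- k-means objective on the rows of `U`. -/
def kmeansObj {k r : ℕ} (U : Matrix (Fin k) (Fin r) ℝ) (Ωh : Fin r → Finset (Fin k))
    (c : Fin r → Fin r → ℝ) : ℝ :=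
  ∑ s, ∑ i ∈ Ωh s, ∑ j, (U i j - c s j) ^ 2

/-- Optimal value of the k-means problem on the rows of `U`. -/
def kmeansOpt {k r : ℕ} (U : Matrix (Fin k) (Fin r) ℝ) : ℝ :=
  sInf {v : ℝ | ∃ Ωh c, IsPartition Ωh ∧ v = kmeansObj U Ωh c}

/-- A (1+ε) approximate solution of the k-means problem on the rows of `U`. -/
def IsApproxKMeans {k r : ℕ} (U : Matrix (Fin k) (Fin r) ℝ) (ε : ℝ)
    (Ωh : Fin r → Finset (Fin k)) (c : Fin r → Fin r → ℝ) : Prop :=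
  IsPartition Ωh ∧ kmeansObj U Ωh c ≤ (1 + ε) * kmeansOpt U

/-- Optimal value of the k-means problem in membership-matrix form. -/
def kmeansOptM {k r : ℕ} (U : Matrix (Fin k) (Fin r) ℝ) : ℝ :=
  sInf {v : ℝ | ∃ (M : Matrix (Fin k) (Fin r) ℝ) (C : Matrix (Fin r) (Fin r) ℝ),
    IsMembership M ∧ v = frob (M * C - U) ^ 2}

/-- Number of t ∈ {1,…,N} with x_{t−1} = i. -/
def countState {k N : ℕ} (x : Fin (N+1) → Fin k) (i : Fin k) : ℕ :=
  (Finset.univ.filter fun t : Fin N => x t.castSucc = i).card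

/-- Number of t ∈ {1,…,N} with x_{t−1} = i and x_t = j. -/
def countTrans {k N : ℕ} (x : Fin (N+1) → Fin k) (i j : Fin k) : ℕ :=
  (Finset.univ.filter fun t : Fin N => x t.castSucc = i ∧ x t.succ = j).card

/-- Empirical state distribution. -/
def empPi {k N : ℕ} (x : Fin (N+1) → Fin k) (i : Fin k) : ℝ :=
  (countState x i : ℝ) / (N : ℝ)

/-- Empirical frequency matrix. -/
def empF {k N : ℕ} (x : Fin (N+1) → Fin k) : Matrix (Fin k) (Fin k) ℝ :=
  Matrix.of fun i j => (countTrans x i j : ℝ) / (N : ℝ)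

/-- Empirical transition matrix (uniform row if a state never occurs). -/
def empMatrix {k N : ℕ} (x : Fin (N+1) → Fin k) : Matrix (Fin k) (Fin k) ℝ :=
  Matrix.of fun i j =>
    if countState x i = 0 then 1 / (k : ℝ)
    else (countTrans x i j : ℝ) / (countState x i : ℝ)

/-- Probability weight of a finite Markov-chain path with initial distribution `pi0`. -/
def pathWeight {k : ℕ} (N : ℕ) (P : Matrix (Fin k) (Fin k) ℝ) (pi0 : Fin k → ℝ)
    (x : Fin (N+1) → Fin k) : ℝ :=
  pi0 (x 0) * ∏ t : Fin N, P (x t.castSucc) (x t.succ)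

/-- Probability of an event over Markov-chain trajectories of length N+1. -/
def pathProb {k : ℕ} (N : ℕ) (P : Matrix (Fin k) (Fin k) ℝ) (pi0 : Fin k → ℝ)
    (E : Set ((Fin (N+1)) → Fin k)) : ℝ :=
  ∑ x : Fin (N+1) → Fin k, E.indicator (pathWeight N P pi0) x

end MJ

open MJ

private lemma l2_sq' {k : ℕ} (v : Fin k → ℝ) : l2 v ^ 2 = ∑ j, v j ^ 2 :=
  Real.sq_sqrt (Finset.sum_nonneg fun _ _ => sq_nonneg _)

private lemma frob_sq' {m k : ℕ} (A : Matrix (Fin m) (Fin k) ℝ) :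
    frob A ^ 2 = ∑ i, ∑ j, A i j ^ 2 :=
  Real.sq_sqrt (Finset.sum_nonneg fun _ _ => Finset.sum_nonneg fun _ _ => sq_nonneg _)

private lemma l2_nonneg' {k : ℕ} (v : Fin k → ℝ) : 0 ≤ l2 v := Real.sqrt_nonneg _

private lemma l2_neg' {k : ℕ} (v : Fin k → ℝ) : l2 (fun j => -(v j)) = l2 v := by
  simp [l2]

private lemma l2_eq_norm' {k : ℕ} (v : Fin k → ℝ) :
    l2 v = ‖(WithLp.equiv 2 (Fin k → ℝ)).symm v‖ := by
  rw [EuclideanSpace.norm_eq, l2]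
  congr 1
  exact Finset.sum_congr rfl fun j _ => by
    rw [Real.norm_eq_abs, sq_abs]; rfl

private lemma l2_triangle' {k : ℕ} (a b : Fin k → ℝ) :
    l2 (fun j => a j + b j) ≤ l2 a + l2 b := by
  rw [l2_eq_norm', l2_eq_norm', l2_eq_norm']
  exact norm_add_le ((WithLp.equiv 2 (Fin k → ℝ)).symm a) ((WithLp.equiv 2 (Fin k → ℝ)).symm b)


open MJ in
/-- approximate k-means error bound (Lemma 5.3 in Lei–Rinaldo). -/
theorem stmt6 {n r : ℕ} (ε : ℝ) (hε : 0 < ε)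
    (U Ub Mb : Matrix (Fin n) (Fin r) ℝ) (Cb : Matrix (Fin r) (Fin r) ℝ)
    (hMb : IsMembership Mb) (hUb : Ub = Mb * Cb)
    (M : Matrix (Fin n) (Fin r) ℝ) (C : Matrix (Fin r) (Fin r) ℝ)
    (hM : IsMembership M)
    (hsol : frob (M * C - U) ^ 2 ≤ (1 + ε) * kmeansOptM U)
    (δ : Fin r → ℝ) (hδpos : ∀ k, 0 < δ k)
    (hδ : ∀ k l, l ≠ k → δ k ≤ l2 (fun j => Cb l j - Cb k j)) :
    (∑ k, (({i : Fin n | Mb i k = 1 ∧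
        δ k / 2 ≤ l2 (fun j => (M * C) i j - Ub i j)}.ncard : ℝ) * δ k ^ 2)
      ≤ 4 * (4 + 2 * ε) * frob (Ub - U) ^ 2) ∧
    ((∀ k, (16 + 8 * ε) * frob (Ub - U) ^ 2 / δ k ^ 2
        < ({i : Fin n | Mb i k = 1}.ncard : ℝ)) →
      ∃ σ : Equiv.Perm (Fin r), ∀ i : Fin n,
        (∃ k, Mb i k = 1 ∧ l2 (fun j => (M * C) i j - Ub i j) < δ k / 2) →
        ∀ j, Mb i j =
          (M * Matrix.of (fun a b : Fin r => if σ a = b then (1 : ℝ) else 0)) i j) := by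
  classical
  choose cl hcl1 hcl0 using hM
  choose clb hclb1 hclb0 using hMb
  have hMb' : IsMembership Mb := fun i => ⟨clb i, hclb1 i, hclb0 i⟩
  have hclbEq : ∀ i k, Mb i k = 1 → clb i = k := by
    intro i k h
    by_contra hne
    have h0 := hclb0 i k (fun h' => hne h'.symm)
    rw [h0] at h; norm_num at h
  have hMCrow : ∀ i j, (M * C) i j = C (cl i) j := by
    intro i j
    rw [Matrix.mul_apply, Finset.sum_eq_single (cl i)]
    · rw [hcl1 i, one_mul]
    · intro b _ hb; rw [hcl0 i b hb, zero_mul]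
    · simp
  have hUbrow : ∀ i k, Mb i k = 1 → ∀ j, Ub i j = Cb k j := by
    intro i k h j
    rw [hUb, Matrix.mul_apply, Finset.sum_eq_single (clb i)]
    · rw [hclb1 i, one_mul, hclbEq i k h]
    · intro b _ hb; rw [hclb0 i b hb, zero_mul]
    · simp
  set S : Fin r → Finset (Fin n) := fun k => Finset.univ.filter
    (fun i => Mb i k = 1 ∧ δ k / 2 ≤ l2 (fun j => (M * C) i j - Ub i j)) with hS
  have hncardS : ∀ k, ({i : Fin n | Mb i k = 1 ∧
      δ k / 2 ≤ l2 (fun j => (M * C) i j - Ub i j)}.ncard : ℝ) = ((S k).card : ℝ) := by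
    intro k
    have hset : {i : Fin n | Mb i k = 1 ∧
        δ k / 2 ≤ l2 (fun j => (M * C) i j - Ub i j)} = ↑(S k) := by
      ext i; simp [hS]
    rw [hset, Set.ncard_coe_finset]
  set E := frob (Ub - U) ^ 2 with hE
  have hE0 : (0:ℝ) ≤ E := by rw [hE]; positivity
  have hopt : kmeansOptM U ≤ E := by
    have hmem : E ∈ {v : ℝ | ∃ (M' : Matrix (Fin n) (Fin r) ℝ)
        (C' : Matrix (Fin r) (Fin r) ℝ), IsMembership M' ∧ v = frob (M' * C' - U) ^ 2} := by
      refine ⟨Mb, Cb, hMb', ?_⟩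
      rw [hE, hUb]
    exact csInf_le ⟨0, fun v hv => by obtain ⟨M', C', _, rfl⟩ := hv; positivity⟩ hmem
  have hsol2 : frob (M * C - U) ^ 2 ≤ (1 + ε) * E :=
    le_trans hsol (mul_le_mul_of_nonneg_left hopt (by linarith))
  have hT : ∑ i, ∑ j, ((M * C) i j - Ub i j) ^ 2 ≤ (4 + 2 * ε) * E := by
    have h1 : ∑ i, ∑ j, ((M * C) i j - Ub i j) ^ 2
        ≤ 2 * frob (M * C - U) ^ 2 + 2 * frob (Ub - U) ^ 2 := by
      rw [frob_sq', frob_sq', Finset.mul_sum, Finset.mul_sum, ← Finset.sum_add_distrib]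
      refine Finset.sum_le_sum fun i _ => ?_
      rw [Finset.mul_sum, Finset.mul_sum, ← Finset.sum_add_distrib]
      refine Finset.sum_le_sum fun j _ => ?_
      simp only [Matrix.sub_apply]
      nlinarith [sq_nonneg ((M * C) i j - U i j + (Ub i j - U i j))]
    calc ∑ i, ∑ j, ((M * C) i j - Ub i j) ^ 2
        ≤ 2 * frob (M * C - U) ^ 2 + 2 * E := by rw [← hE] at h1; exact h1
      _ ≤ 2 * ((1 + ε) * E) + 2 * E := by linarith
      _ = (4 + 2 * ε) * E := by ring
  have hrow : ∀ k, ∀ i ∈ S k, δ k ^ 2 / 4 ≤ ∑ j, ((M * C) i j - Ub i j) ^ 2 := by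
    intro k i hi
    simp only [hS, Finset.mem_filter] at hi
    have h3 : (δ k / 2) ^ 2 ≤ l2 (fun j => (M * C) i j - Ub i j) ^ 2 :=
      pow_le_pow_left₀ (by linarith [hδpos k]) hi.2.2 2
    rw [l2_sq'] at h3
    calc δ k ^ 2 / 4 = (δ k / 2) ^ 2 := by ring
      _ ≤ _ := h3
  have hperk : ∀ k, ((S k).card : ℝ) * (δ k ^ 2 / 4) ≤ ∑ i ∈ S k, ∑ j, ((M * C) i j - Ub i j) ^ 2 := by
    intro k
    have := Finset.sum_le_sum (hrow k)
    rwa [Finset.sum_const, nsmul_eq_mul] at this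
  have hsumall : ∀ k, ∑ i ∈ S k, ∑ j, ((M * C) i j - Ub i j) ^ 2
      ≤ ∑ i, ∑ j, ((M * C) i j - Ub i j) ^ 2 :=
    fun k => Finset.sum_le_sum_of_subset_of_nonneg (Finset.subset_univ _)
      (fun i _ _ => Finset.sum_nonneg fun j _ => sq_nonneg _)
  have hdisj : ∀ a b : Fin r, a ≠ b → Disjoint (S a) (S b) := by
    intro a b hab
    rw [Finset.disjoint_left]
    intro i ha hb
    simp only [hS, Finset.mem_filter] at ha hb
    exact hab ((hclbEq i a ha.2.1).symm.trans (hclbEq i b hb.2.1))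
  have hsum : ∑ k, ((S k).card : ℝ) * (δ k ^ 2 / 4) ≤ ∑ i, ∑ j, ((M * C) i j - Ub i j) ^ 2 := by
    calc ∑ k, ((S k).card : ℝ) * (δ k ^ 2 / 4)
        ≤ ∑ k, ∑ i ∈ S k, ∑ j, ((M * C) i j - Ub i j) ^ 2 := Finset.sum_le_sum fun k _ => hperk k
      _ = ∑ i ∈ Finset.univ.biUnion S, ∑ j, ((M * C) i j - Ub i j) ^ 2 :=
          (Finset.sum_biUnion fun a _ b _ hab => hdisj a b hab).symm
      _ ≤ ∑ i, ∑ j, ((M * C) i j - Ub i j) ^ 2 :=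
          Finset.sum_le_sum_of_subset_of_nonneg (Finset.subset_univ _)
            (fun i _ _ => Finset.sum_nonneg fun j _ => sq_nonneg _)
  refine ⟨?_, ?_⟩
  · simp only [hncardS]
    calc ∑ k, ((S k).card : ℝ) * δ k ^ 2
        = 4 * ∑ k, ((S k).card : ℝ) * (δ k ^ 2 / 4) := by
          rw [Finset.mul_sum]; exact Finset.sum_congr rfl fun k _ => by ring
      _ ≤ 4 * ((4 + 2 * ε) * E) := by
          have := le_trans hsum hT
          linarith
      _ = 4 * (4 + 2 * ε) * E := by ring
  · intro hcond
    have hΩncard : ∀ k, ({i : Fin n | Mb i k = 1}.ncard : ℝ)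
        = ((Finset.univ.filter (fun i => Mb i k = 1)).card : ℝ) := by
      intro k
      have hset : {i : Fin n | Mb i k = 1} = ↑(Finset.univ.filter (fun i => Mb i k = 1)) := by
        ext i; simp
      rw [hset, Set.ncard_coe_finset]
    have hexists : ∀ k, ∃ i, Mb i k = 1 ∧ l2 (fun j => (M * C) i j - Ub i j) < δ k / 2 := by
      intro k
      have hk := hcond k
      rw [hΩncard] at hk
      have hSk : ((S k).card : ℝ) * δ k ^ 2 ≤ (16 + 8 * ε) * E := by
        have h1 := le_trans (le_trans (hperk k) (hsumall k)) hT
        nlinarith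
      have hSk2 : ((S k).card : ℝ) ≤ (16 + 8 * ε) * E / δ k ^ 2 :=
        (le_div_iff₀ (pow_pos (hδpos k) 2)).2 hSk
      have hlt : (S k).card < (Finset.univ.filter (fun i => Mb i k = 1)).card :=
        Nat.cast_lt.mp (lt_of_le_of_lt hSk2 (by rw [hE] at hk ⊢; exact hk))
      have hsub : S k ⊆ Finset.univ.filter (fun i => Mb i k = 1) := by
        intro i hi
        simp only [hS, Finset.mem_filter] at hi ⊢
        exact ⟨hi.1, hi.2.1⟩
      obtain ⟨i, hiΩ, hiS⟩ := Finset.not_subset.mp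
        (fun hsub' => absurd (Finset.card_le_card hsub') (not_le.mpr hlt))
      simp only [Finset.mem_filter] at hiΩ
      refine ⟨i, hiΩ.2, ?_⟩
      by_contra hge
      exact hiS (by simp only [hS, Finset.mem_filter]
                    exact ⟨Finset.mem_univ i, hiΩ.2, not_lt.mp hge⟩)
    choose w hw1 hw2 using hexists
    have keySep : ∀ (k l : Fin r) (i i' : Fin n), Mb i k = 1 →
        l2 (fun j => (M * C) i j - Ub i j) < δ k / 2 → Mb i' l = 1 →
        l2 (fun j => (M * C) i' j - Ub i' j) < δ l / 2 → cl i = cl i' → k = l := by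
      intro k l i i' h1 h2 h3 h4 h5
      by_contra hkl
      have hUbk := hUbrow i k h1
      have hUbl := hUbrow i' l h3
      have hrw : ∀ j, (M * C) i j = (M * C) i' j := fun j => by
        rw [hMCrow, hMCrow, h5]
      have htri := l2_triangle' (fun j => Cb l j - (M * C) i' j) (fun j => (M * C) i j - Cb k j)
      have heq : (fun j => (Cb l j - (M * C) i' j) + ((M * C) i j - Cb k j))
          = fun j => Cb l j - Cb k j := by
        funext j; rw [hrw j]; ring
      rw [heq] at htri
      have e1 : l2 (fun j => Cb l j - (M * C) i' j) = l2 (fun j => (M * C) i' j - Ub i' j) := by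
        rw [← l2_neg' (fun j => (M * C) i' j - Ub i' j)]
        congr 1; funext j; rw [hUbl j]; ring
      have e2 : l2 (fun j => (M * C) i j - Cb k j) = l2 (fun j => (M * C) i j - Ub i j) := by
        congr 1; funext j; rw [hUbk j]
      rw [e1, e2] at htri
      have hδk := hδ k l (fun h => hkl h.symm)
      have hδl := hδ l k hkl
      have hsym : l2 (fun j => Cb k j - Cb l j) = l2 (fun j => Cb l j - Cb k j) := by
        rw [← l2_neg' (fun j => Cb l j - Cb k j)]
        congr 1; funext j; ring
      rw [hsym] at hδl
      linarith
    have hwinj : Function.Injective (fun k => cl (w k)) := by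
      intro k l h
      exact keySep k l (w k) (w l) (hw1 k) (hw2 k) (hw1 l) (hw2 l) h
    let σ : Equiv.Perm (Fin r) :=
      Equiv.ofBijective _ ((Finite.injective_iff_bijective).mp hwinj)
    refine ⟨σ.symm, ?_⟩
    rintro i ⟨k, hk1, hk2⟩ j
    have hcli : cl i = cl (w k) := by
      have hl : cl (w (σ.symm (cl i))) = cl i := σ.apply_symm_apply (cl i)
      have hkeq : k = σ.symm (cl i) :=
        keySep k _ i (w _) hk1 hk2 (hw1 _) (hw2 _) hl.symm
      rw [hkeq]; exact hl.symm
    have hprod : (M * Matrix.of (fun a b : Fin r => if σ.symm a = b then (1:ℝ) else 0)) i j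
        = if σ.symm (cl i) = j then 1 else 0 := by
      rw [Matrix.mul_apply, Finset.sum_eq_single (cl i)]
      · rw [hcl1 i, one_mul]; rfl
      · intro b _ hb; rw [hcl0 i b hb, zero_mul]
      · simp
    have hσ : σ.symm (cl i) = k := by
      rw [hcli]
      exact σ.symm_apply_apply k
    rw [hprod, hσ]
    by_cases hj : k = j
    · subst hj; simp [hk1]
    · rw [if_neg hj]
      exact hclb0 i j (by rw [hclbEq i k hk1]; exact fun h => hj h.symm)
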